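/- For jointly Gaussian real random variables (X, Y) with mean zero, Var(X) = σ² > 0, E[sign(X)·Y] = √(2/(πσ²))·E[X·Y] (Bussgang's theorem for the one-bit quantizer). -/

import Mathlib

open MeasureTheory ProbabilityTheory Real Set
open scoped ENNReal NNReal

noncomputable def pdf01 : ℝ → ℝ := gaussianPDFReal 0 1

lemma pdf01_eq (x : ℝ) : pdf01 x = (Real.sqrt (2*π))⁻¹ * rexp (-x^2/2) := by
  simp [pdf01, gaussianPDFReal]

lemma pdf01_nonneg (x : ℝ) : 0 ≤ pdf01 x := gaussianPDFReal_nonneg 0 1 x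

lemma pdf01_even (x : ℝ) : pdf01 (-x) = pdf01 x := by
  simp [pdf01_eq, neg_pow]

lemma int_gauss (f : ℝ → ℝ) :
    ∫ x, f x ∂(gaussianReal 0 1) = ∫ x, pdf01 x * f x := by
  rw [gaussianReal_of_var_ne_zero _ one_ne_zero]
  have hm : Measurable (fun x => (pdf01 x).toNNReal) :=
    (measurable_gaussianPDFReal 0 1).real_toNNReal
  rw [show gaussianPDF 0 1 = (fun x => ((pdf01 x).toNNReal : ℝ≥0∞)) from rfl,
    integral_withDensity_eq_integral_smul hm f]
  congr 1 with x
  simp only [NNReal.smul_def, smul_eq_mul]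
  rw [Real.coe_toNNReal _ (pdf01_nonneg x)]

lemma int_gauss_integrable (f : ℝ → ℝ) (h : Integrable (fun x => pdf01 x * f x) volume) :
    Integrable f (gaussianReal 0 1) := by
  rw [gaussianReal_of_var_ne_zero _ one_ne_zero]
  have hm : Measurable (fun x => (pdf01 x).toNNReal) :=
    (measurable_gaussianPDFReal 0 1).real_toNNReal
  rw [show gaussianPDF 0 1 = (fun x => ((pdf01 x).toNNReal : ℝ≥0∞)) from rfl,
    integrable_withDensity_iff_integrable_smul hm]
  refine h.congr (Filter.Eventually.of_forall fun x => ?_)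
  simp only [NNReal.smul_def, smul_eq_mul]
  rw [Real.coe_toNNReal _ (pdf01_nonneg x)]

lemma odd_int (f : ℝ → ℝ) (hodd : ∀ x, f (-x) = - f x) : ∫ x, f x = 0 := by
  have h : ∫ x, f (-x) = ∫ x, f x := integral_neg_eq_self f volume
  simp only [hodd, integral_neg] at h
  linarith

lemma int_Ioi_one : ∫ x in Ioi (0:ℝ), x * rexp (-x^2/2) = 1 := by
  have h := integral_rpow_mul_exp_neg_mul_rpow (p := 2) (q := 1) (b := 1/2)
    (by norm_num) (by norm_num) (by norm_num)
  have he : ∀ x ∈ Ioi (0:ℝ), x ^ (1:ℝ) * rexp (-(1/2) * x ^ (2:ℝ)) = x * rexp (-x^2/2) := by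
    intro x hx
    rw [Real.rpow_one, show (2:ℝ) = ((2:ℕ):ℝ) by norm_num, Real.rpow_natCast]
    ring_nf
  rw [setIntegral_congr_fun measurableSet_Ioi he] at h
  rw [h, show ((1+1)/2 : ℝ) = 1 by norm_num, Real.Gamma_one,
    show (-(1+1)/2 : ℝ) = -1 by norm_num, Real.rpow_neg_one]
  norm_num

lemma int_Ioi_two : ∫ x in Ioi (0:ℝ), x^2 * rexp (-x^2/2) = Real.sqrt (2*π)/2 := by
  have h := integral_rpow_mul_exp_neg_mul_rpow (p := 2) (q := 2) (b := 1/2)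
    (by norm_num) (by norm_num) (by norm_num)
  have he : ∀ x ∈ Ioi (0:ℝ), x ^ (2:ℝ) * rexp (-(1/2) * x ^ (2:ℝ)) = x^2 * rexp (-x^2/2) := by
    intro x hx
    rw [show (2:ℝ) = ((2:ℕ):ℝ) by norm_num, Real.rpow_natCast]
    ring_nf
  rw [setIntegral_congr_fun measurableSet_Ioi he] at h
  rw [h]
  have hG : Real.Gamma ((2+1)/2) = Real.sqrt π / 2 := by
    rw [show ((2+1)/2 : ℝ) = 1/2 + 1 by norm_num, Real.Gamma_add_one (by norm_num),
      Real.Gamma_one_half_eq]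
    ring
  have hP : ((1/2 : ℝ)) ^ (-(2+1)/2 : ℝ) = 2 * Real.sqrt 2 := by
    rw [show (1/2 : ℝ) = 2⁻¹ by norm_num, ← Real.rpow_neg_one (2:ℝ),
      ← Real.rpow_mul (by norm_num),
      show ((-1 : ℝ) * (-(2+1)/2 : ℝ)) = 1 + 1/2 by norm_num,
      Real.rpow_add (by norm_num), Real.rpow_one, ← Real.sqrt_eq_rpow]
  rw [hG, hP, Real.sqrt_mul (by norm_num)]
  ring

lemma sqrt2pi_pos : 0 < Real.sqrt (2*π) := Real.sqrt_pos.mpr (by positivity)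

lemma sqrt_two_div_pi : Real.sqrt (2/π) = 2 / Real.sqrt (2*π) := by
  rw [show (2/π:ℝ) = 4 / (2*π) by ring, Real.sqrt_div (by norm_num),
    show (4:ℝ) = 2^2 by norm_num, Real.sqrt_sq (by norm_num)]

lemma gauss_abs : ∫ x, pdf01 x * |x| = Real.sqrt (2/π) := by
  have h2 : ∫ x, pdf01 x * |x|
      = 2 * ∫ t in Ioi (0:ℝ), (Real.sqrt (2*π))⁻¹ * (t * rexp (-t^2/2)) := by
    have he : (fun x : ℝ => pdf01 x * |x|)
        = fun x => (Real.sqrt (2*π))⁻¹ * (|x| * rexp (-|x|^2/2)) := by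
      funext x
      rw [pdf01_eq, sq_abs]
      ring
    rw [he]
    exact integral_comp_abs (f := fun t => (Real.sqrt (2*π))⁻¹ * (t * rexp (-t^2/2)))
  rw [h2, integral_const_mul, int_Ioi_one, sqrt_two_div_pi]
  ring

lemma gauss_sq : ∫ x, pdf01 x * x^2 = 1 := by
  have h2 : ∫ x, pdf01 x * x^2
      = 2 * ∫ t in Ioi (0:ℝ), (Real.sqrt (2*π))⁻¹ * (t^2 * rexp (-t^2/2)) := by
    have he : (fun x : ℝ => pdf01 x * x^2)
        = fun x => (Real.sqrt (2*π))⁻¹ * (|x|^2 * rexp (-|x|^2/2)) := by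
      funext x
      rw [pdf01_eq, sq_abs]
      ring
    rw [he]
    exact integral_comp_abs (f := fun t => (Real.sqrt (2*π))⁻¹ * (t^2 * rexp (-t^2/2)))
  rw [h2, integral_const_mul, int_Ioi_two]
  field_simp

lemma gauss_id : ∫ x, pdf01 x * x = 0 := by
  refine odd_int _ fun x => ?_
  rw [pdf01_even]; ring

lemma gauss_sign : ∫ x, pdf01 x * Real.sign x = 0 := by
  refine odd_int _ fun x => ?_
  rw [pdf01_even, Real.sign_neg]; ring

lemma measurable_rsign : Measurable Real.sign := by
  have h : Real.sign = fun r : ℝ => if r < 0 then (-1:ℝ) else if 0 < r then 1 else 0 := by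
    funext r; rfl
  rw [h]
  exact Measurable.ite (measurableSet_lt measurable_id measurable_const) measurable_const <|
    Measurable.ite (measurableSet_lt measurable_const measurable_id)
      measurable_const measurable_const

lemma ivol_id : Integrable (fun x : ℝ => pdf01 x * x) volume := by
  have h := (integrable_rpow_mul_exp_neg_mul_sq (b := 1/2) (by norm_num)
    (s := 1) (by norm_num)).const_mul (Real.sqrt (2*π))⁻¹
  refine h.congr (Filter.Eventually.of_forall fun x => ?_)
  show (Real.sqrt (2*π))⁻¹ * (x ^ (1:ℝ) * rexp (-(1/2) * x^2)) = pdf01 x * x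
  rw [Real.rpow_one, pdf01_eq, show (-(1/2:ℝ) * x^2) = -x^2/2 from by ring]
  ring

lemma ivol_abs : Integrable (fun x : ℝ => pdf01 x * |x|) volume := by
  refine ivol_id.abs.congr (Filter.Eventually.of_forall fun x => ?_)
  show |pdf01 x * x| = pdf01 x * |x|
  rw [abs_mul, abs_of_nonneg (pdf01_nonneg x)]

lemma ivol_sq : Integrable (fun x : ℝ => pdf01 x * x^2) volume := by
  have h := (integrable_rpow_mul_exp_neg_mul_sq (b := 1/2) (by norm_num)
    (s := 2) (by norm_num)).const_mul (Real.sqrt (2*π))⁻¹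
  refine h.congr (Filter.Eventually.of_forall fun x => ?_)
  show (Real.sqrt (2*π))⁻¹ * (x ^ (2:ℝ) * rexp (-(1/2) * x^2)) = pdf01 x * x^2
  rw [show x ^ (2:ℝ) = x^2 from by
      rw [show (2:ℝ) = ((2:ℕ):ℝ) by norm_num, Real.rpow_natCast],
    pdf01_eq, show (-(1/2:ℝ) * x^2) = -x^2/2 from by ring]
  ring

lemma ivol_sign : Integrable (fun x : ℝ => pdf01 x * Real.sign x) volume := by
  refine Integrable.mono' (integrable_gaussianPDFReal 0 1)
    (((measurable_gaussianPDFReal 0 1).mul measurable_rsign).aestronglyMeasurable)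
    (Filter.Eventually.of_forall fun x => ?_)
  show ‖pdf01 x * Real.sign x‖ ≤ gaussianPDFReal 0 1 x
  rw [Real.norm_eq_abs, abs_mul, abs_of_nonneg (pdf01_nonneg x)]
  rcases Real.sign_apply_eq x with h | h | h <;> simp [h, pdf01] <;>
    first | rfl | exact gaussianPDFReal_nonneg 0 1 x

lemma i_id : Integrable (fun x : ℝ => x) (gaussianReal 0 1) := int_gauss_integrable _ ivol_id
lemma i_abs : Integrable (fun x : ℝ => |x|) (gaussianReal 0 1) := int_gauss_integrable _ ivol_abs
lemma i_sign : Integrable Real.sign (gaussianReal 0 1) := int_gauss_integrable _ ivol_sign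
lemma i_sq : Integrable (fun x : ℝ => x^2) (gaussianReal 0 1) := int_gauss_integrable _ ivol_sq

/-- Bussgang's theorem for the one-bit quantizer: for a centered jointly Gaussian pair
(X, Y) (represented as linear combinations of two independent standard Gaussians) with
Var(X) = σ² > 0, E[sign(X)·Y] = √(2/(πσ²))·E[X·Y]. -/
theorem stmt3 (σ a b : ℝ) (hσ : 0 < σ)
    (μ : Measure (ℝ × ℝ)) (hμ : μ = (gaussianReal 0 1).prod (gaussianReal 0 1))
    (X Y : ℝ × ℝ → ℝ)
    (hX : ∀ p, X p = σ * p.1) (hY : ∀ p, Y p = a * p.1 + b * p.2) :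
    ∫ p, Real.sign (X p) * Y p ∂μ =
      Real.sqrt (2 / (Real.pi * σ ^ 2)) * ∫ p, X p * Y p ∂μ := by
  subst hμ
  have hsgn : ∀ x : ℝ, Real.sign (σ * x) = Real.sign x := by
    intro x
    rcases lt_trichotomy x 0 with h | h | h
    · rw [Real.sign_of_neg h, Real.sign_of_neg (mul_neg_of_pos_of_neg hσ h)]
    · simp [h, Real.sign_zero]
    · rw [Real.sign_of_pos h, Real.sign_of_pos (mul_pos hσ h)]
  have hsx : ∀ x : ℝ, Real.sign x * x = |x| := by
    intro x
    rcases lt_trichotomy x 0 with h | h | h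
    · rw [Real.sign_of_neg h, abs_of_neg h]; ring
    · simp [h]
    · rw [Real.sign_of_pos h, abs_of_pos h]; ring
  have e_abs : ∫ x, |x| ∂(gaussianReal 0 1) = Real.sqrt (2/π) := by
    rw [int_gauss]; exact gauss_abs
  have e_id : ∫ x, x ∂(gaussianReal 0 1) = 0 := by
    rw [int_gauss (fun x => x)]; exact gauss_id
  have e_sq : ∫ x, x^2 ∂(gaussianReal 0 1) = 1 := by
    rw [int_gauss]; exact gauss_sq
  have e_sign : ∫ x, Real.sign x ∂(gaussianReal 0 1) = 0 := by
    rw [int_gauss]; exact gauss_sign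
  have P1 := integral_prod_mul (μ := gaussianReal 0 1) (ν := gaussianReal 0 1)
    (fun x => a * |x|) (fun _ => (1:ℝ))
  have P2 := integral_prod_mul (μ := gaussianReal 0 1) (ν := gaussianReal 0 1)
    Real.sign (fun y => b * y)
  have P3 := integral_prod_mul (μ := gaussianReal 0 1) (ν := gaussianReal 0 1)
    (fun x => (σ * a) * x^2) (fun _ => (1:ℝ))
  have P4 := integral_prod_mul (μ := gaussianReal 0 1) (ν := gaussianReal 0 1)
    (fun x => σ * x) (fun y => b * y)
  beta_reduce at P1 P2 P3 P4
  have hL : ∫ p, Real.sign (X p) * Y p ∂((gaussianReal 0 1).prod (gaussianReal 0 1))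
      = a * Real.sqrt (2/π) := by
    have he : ∫ p, Real.sign (X p) * Y p ∂((gaussianReal 0 1).prod (gaussianReal 0 1))
        = ∫ p : ℝ × ℝ, (a * |p.1| * 1 + Real.sign p.1 * (b * p.2))
            ∂((gaussianReal 0 1).prod (gaussianReal 0 1)) := by
      refine integral_congr_ae (Filter.Eventually.of_forall fun p => ?_)
      simp only [hX, hY, hsgn]
      rw [← hsx p.1]
      ring
    rw [he, integral_add ((i_abs.const_mul a).mul_prod (integrable_const 1))
        (i_sign.mul_prod (i_id.const_mul b)),
      P1, P2, e_sign, integral_const_mul, e_abs]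
    simp
  have hR : ∫ p, X p * Y p ∂((gaussianReal 0 1).prod (gaussianReal 0 1)) = σ * a := by
    have he : ∫ p, X p * Y p ∂((gaussianReal 0 1).prod (gaussianReal 0 1))
        = ∫ p : ℝ × ℝ, ((σ * a) * p.1^2 * 1 + σ * p.1 * (b * p.2))
            ∂((gaussianReal 0 1).prod (gaussianReal 0 1)) := by
      refine integral_congr_ae (Filter.Eventually.of_forall fun p => ?_)
      simp only [hX, hY]
      ring
    rw [he, integral_add ((i_sq.const_mul (σ*a)).mul_prod (integrable_const 1))
        ((i_id.const_mul σ).mul_prod (i_id.const_mul b)),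
      P3, P4, integral_const_mul, integral_const_mul, e_sq, e_id]
    simp
  rw [hL, hR]
  have hs : Real.sqrt (2 / (π * σ^2)) = Real.sqrt (2/π) / σ := by
    rw [show (2 / (π * σ^2) : ℝ) = (2/π) / σ^2 by ring,
      Real.sqrt_div (by positivity), Real.sqrt_sq hσ.le]
  rw [hs]
  field_simp
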